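/- arXiv:1910.11171 — 2 statements merged into one kernel-verified Lean document; each statement's English description precedes it below -/
import Mathlib

section
/- Let f : L₁ → L₂ be a homomorphism of finitely generated free ℤ-modules. Then the cokernel of the dual map f* : Hom(L₂, ℤ) → Hom(L₁, ℤ) is finite if and only if f is injective. -/
/-- Any linear functional on a submodule of a finite free module over a PID extends to the
whole module after multiplication by a nonzero scalar. -/
lemma exists_dual_extend {R M : Type*} [CommRing R] [IsDomain R] [IsPrincipalIdealRing R]
    [AddCommGroup M] [Module R M]
    [Module.Free R M] [Module.Finite R M] (N : Submodule R M) (ξ : N →ₗ[R] R) :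
    ∃ (n : R), n ≠ 0 ∧ ∃ ψ : Module.Dual R M, ∀ x : N, ψ x = n * ξ x := by
  classical
  let b := Module.Free.chooseBasis R M
  obtain ⟨k, snf⟩ := N.smithNormalForm b
  have ha : ∀ i, snf.a i ≠ 0 := by
    intro i h
    apply snf.bN.ne_zero i
    have h2 : ((snf.bN i : N) : M) = 0 := by rw [snf.snf i, h, zero_smul]
    exact Subtype.ext h2
  refine ⟨∏ i, snf.a i, Finset.prod_ne_zero_iff.mpr (fun i _ => ha i), ?_⟩
  refine ⟨∑ i : Fin k,
      ((∏ j ∈ Finset.univ.erase i, snf.a j) * ξ (snf.bN i)) • snf.bM.coord (snf.f i), ?_⟩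
  intro x
  have hcoord : ∀ i : Fin k, snf.bM.coord (snf.f i) (x : M) = snf.a i * snf.bN.coord i x := by
    intro i
    have := congrArg (fun g => g x) (snf.coord_apply_embedding_eq_smul_coord (i := i))
    simpa using this
  have hx : ξ x = ∑ i : Fin k, snf.bN.repr x i * ξ (snf.bN i) := by
    conv_lhs => rw [← snf.bN.sum_repr x]
    rw [map_sum]
    simp [smul_eq_mul]
  rw [LinearMap.sum_apply]
  simp only [LinearMap.smul_apply, smul_eq_mul, hcoord]
  rw [hx, Finset.mul_sum]
  refine Finset.sum_congr rfl (fun i _ => ?_)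
  have hprod : (∏ j ∈ Finset.univ.erase i, snf.a j) * snf.a i = ∏ j, snf.a j :=
    Finset.prod_erase_mul _ _ (Finset.mem_univ i)
  have hc : snf.bN.coord i x = snf.bN.repr x i := rfl
  rw [hc]
  calc (∏ j ∈ Finset.univ.erase i, snf.a j) * ξ (snf.bN i) * (snf.a i * snf.bN.repr x i)
      = ((∏ j ∈ Finset.univ.erase i, snf.a j) * snf.a i) * (snf.bN.repr x i * ξ (snf.bN i)) := by
        ring
    _ = (∏ j, snf.a j) * (snf.bN.repr x i * ξ (snf.bN i)) := by rw [hprod]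

/-- Let `f : L₁ → L₂` be a homomorphism of finitely generated free `ℤ`-modules.  Then the
cokernel of the dual map `f* : Hom(L₂, ℤ) → Hom(L₁, ℤ)` is finite if and only if `f` is
injective. -/
theorem stmt3 {L₁ L₂ : Type} [AddCommGroup L₁] [AddCommGroup L₂]
    [Module ℤ L₁] [Module ℤ L₂]
    [Module.Free ℤ L₁] [Module.Finite ℤ L₁] [Module.Free ℤ L₂] [Module.Finite ℤ L₂]
    (f : L₁ →ₗ[ℤ] L₂) :
    Finite (Module.Dual ℤ L₁ ⧸ LinearMap.range f.dualMap) ↔ Function.Injective f := by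
  constructor
  · intro hfin
    rw [injective_iff_map_eq_zero]
    intro x hx
    rw [← Module.forall_dual_apply_eq_zero_iff ℤ x]
    intro φ
    set q : Module.Dual ℤ L₁ ⧸ LinearMap.range f.dualMap := Submodule.Quotient.mk φ with hq
    obtain ⟨n, hn, hnq⟩ := (isOfFinAddOrder_iff_nsmul_eq_zero).mp (isOfFinAddOrder_of_finite q)
    have hmem : (n : ℤ) • φ ∈ LinearMap.range f.dualMap := by
      rw [← Submodule.Quotient.mk_eq_zero]
      have h1 : Submodule.Quotient.mk (p := LinearMap.range f.dualMap) ((n : ℤ) • φ)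
          = (n : ℤ) • q := by rw [hq, Submodule.Quotient.mk_smul]
      rw [h1, Nat.cast_smul_eq_nsmul ℤ n q]
      exact hnq
    obtain ⟨ψ, hψ⟩ := hmem
    have h2 := congrArg (fun g => g x) hψ
    simp only [LinearMap.dualMap_apply, LinearMap.smul_apply, smul_eq_mul] at h2
    rw [hx, map_zero] at h2
    have hn' : (n : ℤ) ≠ 0 := Int.natCast_ne_zero.mpr hn.ne'
    exact (mul_eq_zero.mp h2.symm).resolve_left hn'
  · intro hf
    apply Module.finite_of_fg_torsion
    intro z
    obtain ⟨φ, rfl⟩ := Submodule.Quotient.mk_surjective _ z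
    letI : Module ℤ ↥(LinearMap.range f) := (LinearMap.range f).module
    let e := LinearEquiv.ofInjective f hf
    obtain ⟨n, hn, ψ, hψ⟩ := exists_dual_extend (LinearMap.range f) (φ ∘ₗ e.symm.toLinearMap)
    refine ⟨⟨n, mem_nonZeroDivisors_of_ne_zero hn⟩, ?_⟩
    have hmem : n • φ ∈ LinearMap.range f.dualMap := by
      refine ⟨ψ, ?_⟩
      ext x
      have h1 : ψ (f x) = n * φ x := by
        have h2 := hψ (e x)
        have h3 : ((e x : L₂)) = f x := rfl
        rw [h3] at h2
        simpa using h2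
      simpa using h1
    have h4 : (⟨n, mem_nonZeroDivisors_of_ne_zero hn⟩ : nonZeroDivisors ℤ) •
        (Submodule.Quotient.mk (p := LinearMap.range f.dualMap) φ)
        = Submodule.Quotient.mk (n • φ) := rfl
    rw [h4, Submodule.Quotient.mk_eq_zero]
    exact hmem
end

section
/- Let A be an abelian group such that A[n] (the n-torsion subgroup) is finite for every n ≥ 1, and suppose A is torsion. Then for every prime ℓ, the quotient of the ℓ-primary component A{ℓ} by its maximal divisible subgroup is isomorphic to the ℓ-adic completion lim_k A{ℓ}/ℓ^k A{ℓ}. -/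
/-- The subgroup `nA` of `n`-th multiples of an abelian group `A`. -/
def mulSub (A : Type*) [AddCommGroup A] (n : ℕ) : AddSubgroup A :=
  AddMonoidHom.range (n • AddMonoidHom.id A)

lemma mulSub_le (A : Type*) [AddCommGroup A] {a b : ℕ} (h : a ∣ b) :
    mulSub A b ≤ mulSub A a := by
  obtain ⟨c, rfl⟩ := h
  rintro x ⟨y, rfl⟩
  exact ⟨c • y, by simp [mul_smul]⟩

/-- The canonical projection `A/bA → A/aA` for `a ∣ b`. -/
def projDvd (A : Type*) [AddCommGroup A] {a b : ℕ} (h : a ∣ b) :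
    A ⧸ mulSub A b →+ A ⧸ mulSub A a :=
  QuotientAddGroup.map _ _ (AddMonoidHom.id A) (fun _ hx => mulSub_le A h hx)

/-- The `ℓ`-primary component `A{ℓ}` of an abelian group `A`: the subgroup of elements of
`ℓ`-power order. -/
def primaryComponent (A : Type*) [AddCommGroup A] (ℓ : ℕ) : AddSubgroup A where
  carrier := {a | ∃ k : ℕ, ℓ ^ k • a = 0}
  zero_mem' := ⟨0, by simp⟩
  add_mem' := by
    rintro a b ⟨k, hk⟩ ⟨j, hj⟩
    refine ⟨k + j, ?_⟩
    rw [smul_add, pow_add, mul_smul, mul_smul, hj, smul_zero, add_zero, smul_comm, hk, smul_zero]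
  neg_mem' := by
    rintro a ⟨k, hk⟩
    exact ⟨k, by rw [smul_neg, hk, neg_zero]⟩

/-- The maximal divisible subgroup of an abelian group: the sum of all divisible subgroups. -/
def maxDivisible (B : Type*) [AddCommGroup B] : AddSubgroup B :=
  sSup {D : AddSubgroup B | ∀ d ∈ D, ∀ n : ℕ, 1 ≤ n → ∃ e ∈ D, n • e = d}

/-- The `ℓ`-adic completion `lim_k B/ℓ^k B` of an abelian group `B`, as a subgroup of the
product of the quotients `B/ℓ^k B`. -/
def ellAdicCompletion (B : Type*) [AddCommGroup B] (ℓ : ℕ) :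
    AddSubgroup (∀ k : ℕ, B ⧸ mulSub B (ℓ ^ k)) where
  carrier := {f | ∀ k k' : ℕ, ∀ h : k ≤ k', projDvd B (pow_dvd_pow ℓ h) (f k') = f k}
  zero_mem' := by intro k k' h; simp
  add_mem' := by
    intro f g hf hg k k' h
    simp [Pi.add_apply, map_add, hf k k' h, hg k k' h]
  neg_mem' := by
    intro f hf k k' h
    simp [Pi.neg_apply, map_neg, hf k k' h]

lemma mem_mulSub {B : Type*} [AddCommGroup B] {n : ℕ} {x : B} :
    x ∈ mulSub B n ↔ ∃ y, n • y = x := by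
  simp [mulSub, AddMonoidHom.mem_range]

-- stabilization of the ℓ-torsion of mulSub
lemma exists_stab {B : Type*} [AddCommGroup B] (ℓ : ℕ)
    (hfin : Finite {b : B // ℓ • b = 0}) :
    ∃ K : ℕ, ∀ k, K ≤ k → {b : B | ℓ • b = 0 ∧ b ∈ mulSub B (ℓ ^ k)} =
      {b : B | ℓ • b = 0 ∧ b ∈ mulSub B (ℓ ^ K)} := by
  set S : ℕ → Set B := fun k => {b : B | ℓ • b = 0 ∧ b ∈ mulSub B (ℓ ^ k)} with hS
  have h1 : ({b : B | ℓ • b = 0}).Finite := Set.finite_coe_iff.mp hfin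
  have hSfin : ∀ k, (S k).Finite := fun k => h1.subset (fun x hx => hx.1)
  have hmono : ∀ k k', k ≤ k' → S k' ⊆ S k := by
    intro k k' h x hx
    exact ⟨hx.1, mulSub_le B (pow_dvd_pow ℓ h) hx.2⟩
  have hne : (Set.range fun k => (S k).ncard).Nonempty := ⟨(S 0).ncard, ⟨0, rfl⟩⟩
  obtain ⟨K, hK⟩ := Nat.sInf_mem hne
  simp only at hK
  refine ⟨K, fun k hk => ?_⟩
  refine Set.eq_of_subset_of_ncard_le (hmono K k hk) ?_ (hSfin K)
  rw [hK]
  exact Nat.sInf_le ⟨k, rfl⟩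

lemma mulSub_stab {B : Type*} [AddCommGroup B] {ℓ : ℕ} {K : ℕ}
    (htor : ∀ b : B, ∃ n : ℕ, ℓ ^ n • b = 0)
    (hstab : ∀ k, K ≤ k → {b : B | ℓ • b = 0 ∧ b ∈ mulSub B (ℓ ^ k)} =
      {b : B | ℓ • b = 0 ∧ b ∈ mulSub B (ℓ ^ K)}) :
    ∀ k, K ≤ k → mulSub B (ℓ ^ k) = mulSub B (ℓ ^ K) := by
  -- first, one-step stability
  have key : ∀ n : ℕ, ∀ j, K ≤ j → ∀ b : B, ℓ ^ n • b = 0 → b ∈ mulSub B (ℓ ^ j) →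
      b ∈ mulSub B (ℓ ^ (j + 1)) := by
    intro n
    induction n with
    | zero => intro j hj b hb _; simp only [pow_zero, one_smul] at hb; subst hb; exact zero_mem _
    | succ n ih =>
      intro j hj b hb hbj
      obtain ⟨x, hx⟩ := mem_mulSub.mp hbj
      have h1 : ℓ • b ∈ mulSub B (ℓ ^ (j + 1)) := by
        refine mem_mulSub.mpr ⟨x, ?_⟩
        rw [pow_succ, mul_comm, mul_smul, hx]
      have h2 : ℓ ^ n • (ℓ • b) = 0 := by
        rw [smul_comm, ← hb, pow_succ, mul_comm, mul_smul]
      have h3 : ℓ • b ∈ mulSub B (ℓ ^ (j + 2)) := ih (j + 1) (le_trans hj (Nat.le_succ j)) _ h2 h1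
      obtain ⟨y, hy⟩ := mem_mulSub.mp h3
      set c := b - ℓ ^ (j + 1) • y with hc
      have hc1 : ℓ • c = 0 := by
        rw [hc, smul_sub, ← hy, ← mul_smul, ← pow_succ', sub_self]
      have hc2 : c ∈ mulSub B (ℓ ^ j) := by
        refine sub_mem hbj (mem_mulSub.mpr ⟨ℓ • y, ?_⟩)
        rw [smul_comm, ← mul_smul, mul_comm, ← pow_succ]
      have hcK : c ∈ {b : B | ℓ • b = 0 ∧ b ∈ mulSub B (ℓ ^ K)} := by
        rw [← hstab j hj]; exact ⟨hc1, hc2⟩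
      have hcj1 : c ∈ mulSub B (ℓ ^ (j + 1)) := by
        have := (hstab (j + 1) (le_trans hj (Nat.le_succ j))).symm ▸ hcK
        exact this.2
      have : b = c + ℓ ^ (j + 1) • y := by rw [hc]; abel
      rw [this]
      exact add_mem hcj1 (mem_mulSub.mpr ⟨y, rfl⟩)
  intro k hk
  induction k with
  | zero => cases Nat.le_zero.mp hk; rfl
  | succ k ih =>
    rcases Nat.lt_or_ge K (k + 1) with h | h
    · have hKk : K ≤ k := Nat.lt_succ_iff.mp h
      rw [← ih hKk]
      refine le_antisymm (mulSub_le B (pow_dvd_pow ℓ (Nat.le_succ k))) ?_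
      intro b hb
      obtain ⟨n, hn⟩ := htor b
      exact key n k hKk b hn hb
    · cases le_antisymm hk h; rfl

lemma maxDivisible_eq {B : Type*} [AddCommGroup B] {ℓ : ℕ} (hℓ : ℓ.Prime) {K : ℕ}
    (htor : ∀ b : B, ∃ n : ℕ, ℓ ^ n • b = 0)
    (hms : ∀ k, K ≤ k → mulSub B (ℓ ^ k) = mulSub B (ℓ ^ K)) :
    maxDivisible B = mulSub B (ℓ ^ K) := by
  apply le_antisymm
  · -- every divisible subgroup is contained in ℓ^K B
    refine sSup_le fun D hD => fun g hg => ?_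
    obtain ⟨e, _, he⟩ := hD g hg (ℓ ^ K) (Nat.one_le_iff_ne_zero.mpr (pow_ne_zero K hℓ.pos.ne'))
    exact mem_mulSub.mpr ⟨e, he⟩
  · -- ℓ^K B is divisible
    refine le_sSup ?_
    intro d hd n hn
    -- write n = ℓ^j * m with m coprime to ℓ
    set j := n.factorization ℓ with hj
    set m := n / ℓ ^ j with hm
    have hnm : ℓ ^ j * m = n := Nat.ordProj_mul_ordCompl_eq_self n ℓ
    have hmd : ¬ ℓ ∣ m := Nat.not_dvd_ordCompl hℓ (Nat.one_le_iff_ne_zero.mp hn)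
    -- divide by ℓ^j
    have hd' : d ∈ mulSub B (ℓ ^ (K + j)) := (hms (K + j) (Nat.le_add_right K j)) ▸ hd
    obtain ⟨x, hx⟩ := mem_mulSub.mp hd'
    have he₁ : (ℓ ^ K • x) ∈ mulSub B (ℓ ^ K) := mem_mulSub.mpr ⟨x, rfl⟩
    set e₁ := ℓ ^ K • x with he₁def
    have hje₁ : ℓ ^ j • e₁ = d := by
      rw [he₁def, ← mul_smul, ← pow_add, Nat.add_comm j K, hx]
    -- divide by m using coprimality with the order of e₁
    obtain ⟨r, hr⟩ := htor e₁
    have hcop : IsCoprime (m : ℤ) ((ℓ : ℤ) ^ r) := by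
      rw [← Nat.cast_pow]
      rw [Nat.isCoprime_iff_coprime]
      exact (Nat.Coprime.pow_right r ((Nat.coprime_comm).mp ((hℓ.coprime_iff_not_dvd).mpr hmd)))
    obtain ⟨u, v, huv⟩ := hcop
    set e₂ := u • e₁ with he₂def
    have he₂ : e₂ ∈ mulSub B (ℓ ^ K) := zsmul_mem he₁ u
    have hme₂ : m • e₂ = e₁ := by
      have hzr : (ℓ : ℤ) ^ r • e₁ = 0 := by
        have : ((ℓ ^ r : ℕ) : ℤ) • e₁ = 0 := by rw [natCast_zsmul]; exact hr
        rwa [Nat.cast_pow] at this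
      have : ((u * m + v * ℓ ^ r) : ℤ) • e₁ = e₁ := by rw [huv, one_smul]
      rw [add_smul, mul_smul, mul_smul, hzr, smul_zero, add_zero] at this
      calc m • e₂ = (m : ℤ) • (u • e₁) := by rw [he₂def, natCast_zsmul]
        _ = u • ((m : ℤ) • e₁) := by rw [smul_comm]
        _ = e₁ := this
    refine ⟨e₂, he₂, ?_⟩
    rw [← hnm, mul_smul, hme₂, hje₁]

lemma projDvd_mk {B : Type*} [AddCommGroup B] {a b : ℕ} (h : a ∣ b) (x : B) :
    projDvd B h (QuotientAddGroup.mk x) = QuotientAddGroup.mk x := by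
  rfl

lemma main_equiv {B : Type*} [AddCommGroup B] (ℓ : ℕ) (hℓ : ℓ.Prime)
    (htor : ∀ b : B, ∃ n : ℕ, ℓ ^ n • b = 0)
    (hfin : Finite {b : B // ℓ • b = 0}) :
    Nonempty ((B ⧸ maxDivisible B) ≃+ ellAdicCompletion B ℓ) := by
  obtain ⟨K, hstab⟩ := exists_stab ℓ hfin
  have hms := mulSub_stab htor hstab
  have hmax := maxDivisible_eq hℓ htor hms
  -- the diagonal map
  let p : B →+ ∀ k, B ⧸ mulSub B (ℓ ^ k) :=
    { toFun := fun b k => QuotientAddGroup.mk b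
      map_zero' := by funext k; rfl
      map_add' := fun x y => by funext k; rfl }
  have hpmem : ∀ b : B, p b ∈ ellAdicCompletion B ℓ := by
    intro b k k' h
    show projDvd B (pow_dvd_pow ℓ h) (QuotientAddGroup.mk b) = QuotientAddGroup.mk b
    exact projDvd_mk _ b
  let ψ : B →+ ellAdicCompletion B ℓ := p.codRestrict _ hpmem
  have hker : ψ.ker = maxDivisible B := by
    rw [hmax]
    ext b
    simp only [AddMonoidHom.mem_ker]
    constructor
    · intro hb
      have := congrArg (fun f => (f : ∀ k, B ⧸ mulSub B (ℓ ^ k)) K) (Subtype.ext_iff.mp hb)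
      have hbK : (QuotientAddGroup.mk b : B ⧸ mulSub B (ℓ ^ K)) = 0 := this
      exact (QuotientAddGroup.eq_zero_iff b).mp hbK
    · intro hb
      refine Subtype.ext (funext fun k => ?_)
      show (QuotientAddGroup.mk b : B ⧸ mulSub B (ℓ ^ k)) = 0
      refine (QuotientAddGroup.eq_zero_iff b).mpr ?_
      rcases le_or_gt k K with h | h
      · exact mulSub_le B (pow_dvd_pow ℓ h) hb
      · rw [hms k h.le]; exact hb
  have hsurj : Function.Surjective ψ := by
    rintro ⟨f, hf⟩
    obtain ⟨b, hb⟩ := QuotientAddGroup.mk_surjective (f K)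
    refine ⟨b, Subtype.ext (funext fun k => ?_)⟩
    show (QuotientAddGroup.mk b : B ⧸ mulSub B (ℓ ^ k)) = f k
    rcases le_or_gt k K with h | h
    · rw [← hf k K h, ← hb, projDvd_mk]
    · -- projDvd from level k to level K is injective since subgroups agree
      have hinj : Function.Injective (projDvd B (pow_dvd_pow ℓ h.le)) := by
        intro x y hxy
        obtain ⟨x, rfl⟩ := QuotientAddGroup.mk_surjective x
        obtain ⟨y, rfl⟩ := QuotientAddGroup.mk_surjective y
        rw [projDvd_mk, projDvd_mk] at hxy
        have := (QuotientAddGroup.eq (s := mulSub B (ℓ ^ K))).mp hxy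
        exact QuotientAddGroup.eq.mpr (by rwa [hms k h.le])
      apply hinj
      rw [projDvd_mk, hb, hf K k h.le]
  rw [← hmax] at *
  exact ⟨(hker ▸ QuotientAddGroup.quotientKerEquivOfSurjective ψ hsurj : (B ⧸ maxDivisible B) ≃+ ellAdicCompletion B ℓ)⟩

/-- Let `A` be a torsion abelian group of cofinite type (each `A[n]` finite).  Then for every
prime `ℓ`, the quotient of the `ℓ`-primary component `A{ℓ}` by its maximal divisible subgroup is
isomorphic to the `ℓ`-adic completion `lim_k A{ℓ}/ℓ^k A{ℓ}`. -/
theorem stmt8 (A : Type) [AddCommGroup A] (htors : AddMonoid.IsTorsion A)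
    (hcof : ∀ n : ℕ, 1 ≤ n → Finite {a : A // n • a = 0})
    (ℓ : ℕ) (hℓ : ℓ.Prime) :
    Nonempty ((↥(primaryComponent A ℓ) ⧸ maxDivisible ↥(primaryComponent A ℓ)) ≃+
      ↥(ellAdicCompletion (↥(primaryComponent A ℓ)) ℓ)) := by
  apply main_equiv ℓ hℓ
  · intro b
    obtain ⟨k, hk⟩ := b.2
    exact ⟨k, Subtype.ext (by simpa using hk)⟩
  · have : Finite {a : A // ℓ • a = 0} := hcof ℓ hℓ.one_lt.le
    refine Finite.of_injective
      (fun b : {b : ↥(primaryComponent A ℓ) // ℓ • b = 0} =>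
        (⟨(b.1 : A), by
            have h : ((ℓ • b.1 : ↥(primaryComponent A ℓ)) : A) = ((0 : ↥(primaryComponent A ℓ)) : A) :=
              congrArg _ b.2
            rwa [AddSubgroup.coe_nsmul, AddSubgroup.coe_zero] at h⟩ :
          {a : A // ℓ • a = 0})) ?_
    intro x y hxy
    simp only [Subtype.mk.injEq] at hxy
    exact Subtype.ext (Subtype.ext hxy)
end
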